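/- If G is dicotic, G → H is dicotic, and X is a game equal in value to a dyadic rational x, then G → (X + H) = X + (G → H) as game values. -/

import Mathlib

namespace SetTheory

universe u

/-- Combinatorial pregames (Mathlib's former `SetTheory.PGame`, removed from Mathlib). -/
inductive PGame : Type (u + 1)
  | mk : ∀ α β : Type u, (α → PGame) → (β → PGame) → PGame

namespace PGame

/-- The type of Left moves. -/
def LeftMoves : PGame → Type u
  | mk l _ _ _ => l

/-- The type of Right moves. -/
def RightMoves : PGame → Type u
  | mk _ r _ _ => r

/-- Left move. -/
def moveLeft : ∀ g : PGame, LeftMoves g → PGame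
  | mk _ _ L _ => L

/-- Right move. -/
def moveRight : ∀ g : PGame, RightMoves g → PGame
  | mk _ _ _ R => R

instance : Zero PGame :=
  ⟨⟨PEmpty, PEmpty, PEmpty.elim, PEmpty.elim⟩⟩

instance : One PGame :=
  ⟨⟨PUnit, PEmpty, fun _ => 0, PEmpty.elim⟩⟩

/-- The game `∗ = {0 | 0}`. -/
def star : PGame.{u} :=
  ⟨PUnit, PUnit, fun _ => 0, fun _ => 0⟩

/-- Negation of a pregame. -/
def neg : PGame → PGame
  | ⟨l, r, L, R⟩ => ⟨r, l, fun i => neg (R i), fun i => neg (L i)⟩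

instance : Neg PGame :=
  ⟨neg⟩

/-- Disjunctive sum of pregames. -/
def addAux {xl xr : Type u} (fL : xl → PGame.{u} → PGame.{u}) (fR : xr → PGame.{u} → PGame.{u}) :
    PGame.{u} → PGame.{u}
  | mk yl yr yL yR =>
    mk (xl ⊕ yl) (xr ⊕ yr) (Sum.elim (fun i => fL i (mk yl yr yL yR)) (fun j => addAux fL fR (yL j)))
      (Sum.elim (fun i => fR i (mk yl yr yL yR)) (fun j => addAux fL fR (yR j)))

/-- Disjunctive sum: the options of `x + y` are `xL + y`, `x + yL` (resp. `xR + y`, `x + yR`). -/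
def add : PGame.{u} → PGame.{u} → PGame.{u}
  | mk _ _ xL xR => addAux (fun i => add (xL i)) (fun i => add (xR i))

instance : Add PGame.{u} :=
  ⟨add⟩

instance : Sub PGame :=
  ⟨fun x y => x + -y⟩

/-- `(leLF x y).1` is `x ≤ y` and `(leLF x y).2` is `x ⧏ y` (Conway's simultaneous definition). -/
noncomputable def leLF (x : PGame.{u}) : PGame.{u} → Prop × Prop :=
  PGame.rec (motive := fun _ => PGame.{u} → Prop × Prop)
    (fun xl xr _ _ IHxl IHxr y =>
      PGame.rec (motive := fun _ => Prop × Prop)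
        (fun yl yr yL yR IHyl IHyr =>
          ((∀ i, (IHxl i (mk yl yr yL yR)).2) ∧ (∀ j, (IHyr j).2),
           (∃ j, (IHyl j).1) ∨ (∃ i, (IHxr i (mk yl yr yL yR)).1))) y) x

/-- The order `x ≤ y` on pregames. -/
def le (x y : PGame) : Prop := (leLF x y).1

/-- Game equivalence `x ≈ y`: `x ≤ y ∧ y ≤ x`. -/
def Equiv (x y : PGame) : Prop := le x y ∧ le y x

instance : HasEquiv PGame :=
  ⟨Equiv⟩

/-- A short pregame. -/
class inductive Short : PGame.{u} → Type (u + 1)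
  | mk :
    ∀ {α β : Type u} {L : α → PGame.{u}} {R : β → PGame.{u}} (_ : ∀ i : α, Short (L i))
      (_ : ∀ j : β, Short (R j)) [Fintype α] [Fintype β] [DecidableEq α] [DecidableEq β],
      Short ⟨α, β, L, R⟩

/-- `powHalf n` is the game `1/2^n`. -/
def powHalf : ℕ → PGame
  | 0 => 1
  | n + 1 => ⟨PUnit, PUnit, fun _ => 0, fun _ => powHalf n⟩

/-- `nsmulRec` on pregames: `0 • x = 0`, `(n+1) • x = n • x + x`. -/
def nsmulPG : ℕ → PGame → PGame
  | 0, _ => 0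
  | n + 1, x => nsmulPG n x + x

/-- `zsmulRec` on pregames; its class in `Game` is `m • ⟦x⟧`. -/
def zsmulPG : ℤ → PGame → PGame
  | Int.ofNat n, x => nsmulPG n x
  | Int.negSucc n, x => -nsmulPG (n + 1) x

end PGame

end SetTheory

open SetTheory

open scoped PGame

namespace SeqCompound

open Classical in
/-- The sequential compound `G → H` of two pregames. -/
noncomputable def seqc : PGame → PGame → PGame
  | PGame.mk α β L R, H =>
    if Nonempty α then
      if Nonempty β then
        PGame.mk α β (fun a => seqc (L a) H) (fun b => seqc (R b) H)
      else
        PGame.mk α H.RightMoves (fun a => seqc (L a) H) H.moveRight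
    else
      if Nonempty β then
        PGame.mk H.LeftMoves β H.moveLeft (fun b => seqc (R b) H)
      else H

/-- A pregame is dicotic (all-small) if in every subposition,
Left has an option iff Right has an option. -/
def Dicotic : PGame → Prop
  | PGame.mk α β L R =>
    (Nonempty α ↔ Nonempty β) ∧ (∀ a, Dicotic (L a)) ∧ (∀ b, Dicotic (R b))

/-- The canonical nonnegative integer game `{n-1 | }`. -/
def intGame : ℕ → PGame
  | 0 => 0
  | n + 1 => PGame.mk PUnit PEmpty (fun _ => intGame n) PEmpty.elim

/-- `upSum k` is the disjunctive sum `↑¹ + ↑² + ⋯ + ↑ᵏ`. -/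
def upSum : ℕ → PGame
  | 0 => 0
  | k + 1 => upSum k +
      PGame.mk PUnit PUnit (fun _ => 0) (fun _ => PGame.star - upSum k)

/-- `upPow k` is the game `↑^(k+1) = {0 | ∗ - (↑¹ + ⋯ + ↑ᵏ)}`. -/
def upPow (k : ℕ) : PGame :=
  PGame.mk PUnit PUnit (fun _ => 0) (fun _ => PGame.star - upSum k)

/-- Sequential compound of a list of games. -/
noncomputable def seqList : List PGame → PGame
  | [] => 0
  | G :: l => seqc G (seqList l)

end SeqCompound


namespace SetTheory

namespace PGame

/-- Recursion on options. -/
@[elab_as_elim]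
noncomputable def moveRecOn {C : PGame → Sort*} (x : PGame)
    (IH : ∀ y : PGame, (∀ i, C (y.moveLeft i)) → (∀ j, C (y.moveRight j)) → C y) : C x :=
  x.recOn (fun yl yr yL yR IHl IHr => IH (mk yl yr yL yR) IHl IHr)

/-- The less-or-fuzzy relation. -/
def LF (x y : PGame) : Prop := (leLF x y).2

infix:50 " ⧏ " => SetTheory.PGame.LF

theorem le_def' {x y : PGame} : le x y ↔ (∀ i, x.moveLeft i ⧏ y) ∧ ∀ j, x ⧏ y.moveRight j := by
  cases x; cases y; exact Iff.rfl

theorem lf_def' {x y : PGame} : x ⧏ y ↔ (∃ j, le x (y.moveLeft j)) ∨ ∃ i, le (x.moveRight i) y := by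
  cases x; cases y; exact Iff.rfl

theorem lf_iff_not_le_aux (x y : PGame) : (x ⧏ y ↔ ¬ le y x) ∧ (y ⧏ x ↔ ¬ le x y) := by
  induction x generalizing y with
  | mk xl xr xL xR ihxl ihxr =>
  induction y with
  | mk yl yr yL yR ihyl ihyr =>
  constructor
  · rw [lf_def', le_def', not_and_or, not_forall, not_forall]
    refine or_congr (exists_congr fun j => ?_) (exists_congr fun i => ?_)
    · exact ((ihyl j).2.not.trans not_not).symm
    · exact (((ihxr i _).2).not.trans not_not).symm
  · rw [lf_def', le_def', not_and_or, not_forall, not_forall]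
    refine or_congr (exists_congr fun j => ?_) (exists_congr fun i => ?_)
    · exact (((ihxl j _).1).not.trans not_not).symm
    · exact (((ihyr i).1).not.trans not_not).symm

theorem lf_iff_not_le' {x y : PGame} : x ⧏ y ↔ ¬ le y x := (lf_iff_not_le_aux x y).1

theorem le_refl' : ∀ x : PGame, le x x
  | mk xl xr xL xR => le_def'.2 ⟨fun i => lf_def'.2 (Or.inl ⟨i, le_refl' (xL i)⟩),
      fun j => lf_def'.2 (Or.inr ⟨j, le_refl' (xR j)⟩)⟩

/-- Transitivity for a triple. -/
def TransP (a b c : PGame) : Prop := le a b → le b c → le a c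

theorem transP_of {a b c : PGame} (h1 : ∀ i, TransP b c (a.moveLeft i))
    (h2 : ∀ j, TransP (c.moveRight j) a b) : TransP a b c := by
  intro hab hbc
  refine le_def'.2 ⟨fun i => ?_, fun j => ?_⟩
  · rw [lf_iff_not_le']; intro hc
    exact (lf_iff_not_le'.1 ((le_def'.1 hab).1 i)) (h1 i hbc hc)
  · rw [lf_iff_not_le']; intro hc
    exact (lf_iff_not_le'.1 ((le_def'.1 hbc).2 j)) (h2 j hc hab)

theorem trans_aux (x y z : PGame) : TransP x y z ∧ TransP y z x ∧ TransP z x y := by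
  induction x generalizing y z with
  | mk xl xr xL xR ihxl ihxr =>
  induction y generalizing z with
  | mk yl yr yL yR ihyl ihyr =>
  induction z with
  | mk zl zr zL zR ihzl ihzr =>
  exact ⟨transP_of (fun i => (ihxl i _ _).2.1) (fun j => (ihzr j).2.2),
    transP_of (fun i => (ihyl i _).2.2) (fun j => (ihxr j _ _).1),
    transP_of (fun i => (ihzl i).1) (fun j => (ihyr j _).2.1)⟩

instance : Preorder PGame where
  le := le
  le_refl := le_refl'
  le_trans x y z := (trans_aux x y z).1

theorem le_iff_forall_lf {x y : PGame} :
    x ≤ y ↔ (∀ i, x.moveLeft i ⧏ y) ∧ ∀ j, x ⧏ y.moveRight j := le_def'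

theorem lf_iff_not_le {x y : PGame} : x ⧏ y ↔ ¬ y ≤ x := lf_iff_not_le'

theorem le_of_forall_lf {x y : PGame} (h1 : ∀ i, x.moveLeft i ⧏ y) (h2 : ∀ j, x ⧏ y.moveRight j) :
    x ≤ y := le_def'.2 ⟨h1, h2⟩

theorem lf_of_le_moveLeft {x y : PGame} {i : y.LeftMoves} (h : x ≤ y.moveLeft i) : x ⧏ y :=
  lf_def'.2 (Or.inl ⟨i, h⟩)

theorem lf_of_moveRight_le {x y : PGame} {j : x.RightMoves} (h : x.moveRight j ≤ y) : x ⧏ y :=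
  lf_def'.2 (Or.inr ⟨j, h⟩)

theorem moveLeft_lf {x : PGame} (i : x.LeftMoves) : x.moveLeft i ⧏ x :=
  (le_def'.1 (le_refl x)).1 i

theorem lf_moveRight {x : PGame} (j : x.RightMoves) : x ⧏ x.moveRight j :=
  (le_def'.1 (le_refl x)).2 j

theorem lf_of_le_of_lf {x y z : PGame} (h1 : x ≤ y) (h2 : y ⧏ z) : x ⧏ z := by
  rw [lf_iff_not_le] at h2 ⊢; exact fun h => h2 (le_trans h h1)

theorem lf_of_lf_of_le {x y z : PGame} (h1 : x ⧏ y) (h2 : y ≤ z) : x ⧏ z := by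
  rw [lf_iff_not_le] at h1 ⊢; exact fun h => h1 (le_trans h2 h)

theorem equiv_rfl {x : PGame} : x ≈ x := ⟨le_refl x, le_refl x⟩

@[refl]
theorem equiv_refl (x : PGame) : x ≈ x := equiv_rfl

theorem equiv_symm {x y : PGame} (h : x ≈ y) : y ≈ x := ⟨h.2, h.1⟩

theorem equiv_trans {x y z : PGame} (h1 : x ≈ y) (h2 : y ≈ z) : x ≈ z :=
  ⟨(le_trans h1.1 h2.1 : x ≤ z), (le_trans h2.2 h1.2 : z ≤ x)⟩

instance : Trans (fun x y : PGame => x ≈ y) (fun x y : PGame => x ≈ y) (fun x y : PGame => x ≈ y) :=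
  ⟨equiv_trans⟩

instance setoid : Setoid PGame :=
  ⟨fun x y => x ≈ y, ⟨fun _ => equiv_rfl, equiv_symm, equiv_trans⟩⟩

instance : IsEmpty (0 : PGame).LeftMoves := inferInstanceAs (IsEmpty PEmpty)

instance : IsEmpty (0 : PGame).RightMoves := inferInstanceAs (IsEmpty PEmpty)

/-! Negation -/

theorem neg_def {xl xr : Type u} {xL : xl → PGame} {xR : xr → PGame} :
    -(mk xl xr xL xR) = mk xr xl (fun j => -xR j) (fun i => -xL i) := rfl

theorem neg_le_aux (x y : PGame) : (-y ≤ -x ↔ x ≤ y) ∧ (-x ≤ -y ↔ y ≤ x) := by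
  have lfP : ∀ a b : PGame, (-a ≤ -b ↔ b ≤ a) → (-b ⧏ -a ↔ a ⧏ b) := fun a b h => by
    rw [lf_iff_not_le, lf_iff_not_le, h]
  induction x generalizing y with
  | mk xl xr xL xR ihxl ihxr =>
  induction y with
  | mk yl yr yL yR ihyl ihyr =>
  constructor
  · rw [le_iff_forall_lf, le_iff_forall_lf, and_comm]
    exact and_congr (forall_congr' fun j => lfP _ _ (ihxl j _).2)
      (forall_congr' fun i => lfP _ _ (ihyr i).2)
  · rw [le_iff_forall_lf, le_iff_forall_lf, and_comm]
    exact and_congr (forall_congr' fun j => lfP _ _ (ihyl j).1)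
      (forall_congr' fun i => lfP _ _ (ihxr i _).1)

theorem neg_le_neg_iff {x y : PGame} : -y ≤ -x ↔ x ≤ y := (neg_le_aux x y).1

theorem neg_congr {x y : PGame} (h : x ≈ y) : -x ≈ -y :=
  ⟨neg_le_neg_iff.2 h.2, neg_le_neg_iff.2 h.1⟩

/-- Left moves of a negation. -/
def toLeftMovesNeg {x : PGame} : x.RightMoves ≃ (-x).LeftMoves := by
  cases x; exact Equiv.refl _

/-- Right moves of a negation. -/
def toRightMovesNeg {x : PGame} : x.LeftMoves ≃ (-x).RightMoves := by
  cases x; exact Equiv.refl _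

theorem moveLeft_neg' {x : PGame} (i) : (-x).moveLeft i = -x.moveRight (toLeftMovesNeg.symm i) := by
  cases x; rfl

theorem moveRight_neg' {x : PGame} (i) :
    (-x).moveRight i = -x.moveLeft (toRightMovesNeg.symm i) := by
  cases x; rfl

theorem neg_zero' : -(0 : PGame) = 0 := by
  show mk _ _ _ _ = mk _ _ _ _
  congr <;> funext i <;> exact i.elim

/-! Addition -/

theorem leftMoves_add (x y : PGame) : (x + y).LeftMoves = (x.LeftMoves ⊕ y.LeftMoves) := by
  cases x; cases y; rfl

theorem rightMoves_add (x y : PGame) : (x + y).RightMoves = (x.RightMoves ⊕ y.RightMoves) := by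
  cases x; cases y; rfl

/-- Left moves of a sum. -/
def toLeftMovesAdd {x y : PGame} : x.LeftMoves ⊕ y.LeftMoves ≃ (x + y).LeftMoves :=
  Equiv.cast (leftMoves_add x y).symm

/-- Right moves of a sum. -/
def toRightMovesAdd {x y : PGame} : x.RightMoves ⊕ y.RightMoves ≃ (x + y).RightMoves :=
  Equiv.cast (rightMoves_add x y).symm

theorem add_moveLeft_inl {x y : PGame} (i) :
    (x + y).moveLeft (toLeftMovesAdd (Sum.inl i)) = x.moveLeft i + y := by
  cases x; cases y; rfl

theorem add_moveLeft_inr {x y : PGame} (i) :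
    (x + y).moveLeft (toLeftMovesAdd (Sum.inr i)) = x + y.moveLeft i := by
  cases x; cases y; rfl

theorem add_moveRight_inl {x y : PGame} (i) :
    (x + y).moveRight (toRightMovesAdd (Sum.inl i)) = x.moveRight i + y := by
  cases x; cases y; rfl

theorem add_moveRight_inr {x y : PGame} (i) :
    (x + y).moveRight (toRightMovesAdd (Sum.inr i)) = x + y.moveRight i := by
  cases x; cases y; rfl

theorem leftMoves_add_cases {x y : PGame} (k) {P : (x + y).LeftMoves → Prop}
    (hl : ∀ i, P (toLeftMovesAdd (Sum.inl i))) (hr : ∀ i, P (toLeftMovesAdd (Sum.inr i))) : P k := by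
  rw [← toLeftMovesAdd.apply_symm_apply k]
  rcases toLeftMovesAdd.symm k with i | i
  · exact hl i
  · exact hr i

theorem rightMoves_add_cases {x y : PGame} (k) {P : (x + y).RightMoves → Prop}
    (hl : ∀ j, P (toRightMovesAdd (Sum.inl j))) (hr : ∀ j, P (toRightMovesAdd (Sum.inr j))) :
    P k := by
  rw [← toRightMovesAdd.apply_symm_apply k]
  rcases toRightMovesAdd.symm k with i | i
  · exact hl i
  · exact hr i

theorem add_le_add_right_aux (x y z : PGame) :
    (x ≤ y → x + z ≤ y + z) ∧ (x ⧏ y → x + z ⧏ y + z) := by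
  induction x generalizing y z with
  | mk xl xr xL xR ihxl ihxr =>
  induction y generalizing z with
  | mk yl yr yL yR ihyl ihyr =>
  induction z with
  | mk zl zr zL zR ihzl ihzr =>
  constructor
  · intro h
    refine le_of_forall_lf ?_ ?_
    · rintro (i | k)
      · exact ((ihxl i _ _).2 ((le_iff_forall_lf.1 h).1 i))
      · exact lf_of_le_of_lf ((ihzl k).1 h) (moveLeft_lf (x := mk yl yr yL yR + mk zl zr zL zR) (Sum.inr k))
    · rintro (j | k)
      · exact ((ihyr j _).2 ((le_iff_forall_lf.1 h).2 j))
      · exact lf_of_lf_of_le (lf_moveRight (x := mk xl xr xL xR + mk zl zr zL zR) (Sum.inr k)) ((ihzr k).1 h)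
  · intro h
    rcases lf_def'.1 h with ⟨j, hj⟩ | ⟨i, hi⟩
    · exact lf_of_le_moveLeft (i := Sum.inl j) ((ihyl j _).1 hj)
    · exact lf_of_moveRight_le (j := Sum.inl i) ((ihxr i _ _).1 hi)

theorem add_le_add_right' {x y : PGame} (h : x ≤ y) (z : PGame) : x + z ≤ y + z :=
  (add_le_add_right_aux x y z).1 h

theorem add_lf_add_right {x y : PGame} (h : x ⧏ y) (z : PGame) : x + z ⧏ y + z :=
  (add_le_add_right_aux x y z).2 h

theorem add_comm_le (x y : PGame) : x + y ≤ y + x := by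
  induction x generalizing y with
  | mk xl xr xL xR ihxl ihxr =>
  induction y with
  | mk yl yr yL yR ihyl ihyr =>
  refine le_of_forall_lf ?_ ?_
  · rintro (i | j)
    · exact lf_of_le_moveLeft (i := Sum.inr i) (ihxl i _)
    · exact lf_of_le_moveLeft (i := Sum.inl j) (ihyl j)
  · rintro (j | i)
    · exact lf_of_moveRight_le (j := Sum.inr j) (ihyr j)
    · exact lf_of_moveRight_le (j := Sum.inl i) (ihxr i _)

theorem add_comm_equiv (x y : PGame) : x + y ≈ y + x := ⟨add_comm_le x y, add_comm_le y x⟩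

theorem add_le_add_left' {y z : PGame} (h : y ≤ z) (x : PGame) : x + y ≤ x + z :=
  le_trans (add_comm_le x y) (le_trans (add_le_add_right' h x) (add_comm_le z x))

theorem add_lf_add_left {y z : PGame} (h : y ⧏ z) (x : PGame) : x + y ⧏ x + z :=
  lf_of_le_of_lf (add_comm_le x y) (lf_of_lf_of_le (add_lf_add_right h x) (add_comm_le z x))

theorem add_congr {w x y z : PGame} (h1 : w ≈ x) (h2 : y ≈ z) : w + y ≈ x + z :=
  ⟨le_trans (add_le_add_right' h1.1 y) (add_le_add_left' h2.1 x),
    le_trans (add_le_add_right' h1.2 z) (add_le_add_left' h2.2 w)⟩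

theorem add_assoc_aux (x y z : PGame) : x + y + z ≤ x + (y + z) ∧ x + (y + z) ≤ x + y + z := by
  induction x generalizing y z with
  | mk xl xr xL xR ihxl ihxr =>
  induction y generalizing z with
  | mk yl yr yL yR ihyl ihyr =>
  induction z with
  | mk zl zr zL zR ihzl ihzr =>
  constructor
  · refine le_of_forall_lf ?_ ?_
    · rintro ((i | i) | i)
      · exact lf_of_le_moveLeft (i := Sum.inl i) (ihxl i _ _).1
      · exact lf_of_le_moveLeft (i := Sum.inr (Sum.inl i)) (ihyl i _).1
      · exact lf_of_le_moveLeft (i := Sum.inr (Sum.inr i)) (ihzl i).1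
    · rintro (i | i | i)
      · exact lf_of_moveRight_le (j := Sum.inl (Sum.inl i)) (ihxr i _ _).1
      · exact lf_of_moveRight_le (j := Sum.inl (Sum.inr i)) (ihyr i _).1
      · exact lf_of_moveRight_le (j := Sum.inr i) (ihzr i).1
  · refine le_of_forall_lf ?_ ?_
    · rintro (i | i | i)
      · exact lf_of_le_moveLeft (i := Sum.inl (Sum.inl i)) (ihxl i (mk yl yr yL yR) (mk zl zr zL zR)).2
      · exact lf_of_le_moveLeft (i := Sum.inl (Sum.inr i)) (ihyl i (mk zl zr zL zR)).2
      · exact lf_of_le_moveLeft (i := Sum.inr i) (ihzl i).2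
    · rintro ((i | i) | i)
      · exact lf_of_moveRight_le (j := Sum.inl i) (ihxr i (mk yl yr yL yR) (mk zl zr zL zR)).2
      · exact lf_of_moveRight_le (j := Sum.inr (Sum.inl i)) (ihyr i (mk zl zr zL zR)).2
      · exact lf_of_moveRight_le (j := Sum.inr (Sum.inr i)) (ihzr i).2

theorem zero_add_le_aux (x : PGame) : 0 + x ≤ x ∧ x ≤ 0 + x := by
  induction x with
  | mk xl xr xL xR ihl ihr =>
  constructor
  · refine le_of_forall_lf ?_ ?_
    · rintro (i | i)
      · exact i.elim
      · exact lf_of_le_moveLeft (i := i) (ihl i).1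
    · intro j
      exact lf_of_moveRight_le (j := Sum.inr j) (ihr j).1
  · refine le_of_forall_lf ?_ ?_
    · intro i
      exact lf_of_le_moveLeft (i := Sum.inr i) (ihl i).2
    · rintro (j | j)
      · exact j.elim
      · exact lf_of_moveRight_le (j := j) (ihr j).2

theorem zero_add_equiv (x : PGame) : 0 + x ≈ x := zero_add_le_aux x

theorem add_zero_equiv (x : PGame) : x + 0 ≈ x := equiv_trans (add_comm_equiv x 0) (zero_add_equiv x)

theorem add_neg_aux (x : PGame) : x + -x ≤ 0 ∧ 0 ≤ x + -x := by
  induction x with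
  | mk xl xr xL xR ihl ihr =>
  constructor
  · refine le_of_forall_lf ?_ ?_
    · rintro (i | j)
      · exact lf_of_moveRight_le (x := xL i + -(mk xl xr xL xR))
          (j := toRightMovesAdd (Sum.inr (i : (-(mk xl xr xL xR)).RightMoves)))
          ((add_moveRight_inr _).trans_le (ihl i).1)
      · exact lf_of_moveRight_le (x := (mk xl xr xL xR) + -(xR j))
          (j := toRightMovesAdd (Sum.inl (j : (mk xl xr xL xR).RightMoves)))
          ((add_moveRight_inl _).trans_le (ihr j).1)
    · intro j; exact j.elim
  · refine le_of_forall_lf ?_ ?_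
    · intro i; exact i.elim
    · rintro (j | i)
      · exact lf_of_le_moveLeft (y := xR j + -(mk xl xr xL xR))
          (i := toLeftMovesAdd (Sum.inr (j : (-(mk xl xr xL xR)).LeftMoves)))
          ((ihr j).2.trans_eq (add_moveLeft_inr (x := xR j) (y := -(mk xl xr xL xR)) (j : (-(mk xl xr xL xR)).LeftMoves)).symm)
      · exact lf_of_le_moveLeft (y := (mk xl xr xL xR) + -(xL i))
          (i := toLeftMovesAdd (Sum.inl (i : (mk xl xr xL xR).LeftMoves)))
          ((ihl i).2.trans_eq (add_moveLeft_inl (x := (mk xl xr xL xR)) (y := -(xL i)) (i : (mk xl xr xL xR).LeftMoves)).symm)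

theorem neg_add_cancel_equiv (x : PGame) : -x + x ≈ 0 :=
  equiv_trans (add_comm_equiv _ _) (add_neg_aux x)

/-! powHalf -/

instance uniquePowHalfLeftMoves (n : ℕ) : Unique (powHalf n).LeftMoves := by
  cases n <;> exact PUnit.instUnique

instance isEmpty_powHalf_zero_rightMoves : IsEmpty (powHalf 0).RightMoves :=
  inferInstanceAs (IsEmpty PEmpty)

theorem powHalf_moveLeft (n : ℕ) (i) : (powHalf n).moveLeft i = 0 := by
  cases n <;> rfl

theorem powHalf_succ_moveRight (n : ℕ) (i) : (powHalf (n + 1)).moveRight i = powHalf n := rfl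

theorem zero_le_powHalf (n : ℕ) : 0 ≤ powHalf n := by
  refine le_of_forall_lf (fun i => i.elim) fun j => ?_
  cases n with
  | zero => exact isEmptyElim j
  | succ m => exact lf_of_le_moveLeft (y := powHalf m) (i := default) (by rw [powHalf_moveLeft])

theorem powHalf_succ_lf (n : ℕ) : powHalf (n + 1) ⧏ powHalf n :=
  lf_of_moveRight_le (j := PUnit.unit) (le_refl _)

theorem powHalf_succ_le_powHalf (n : ℕ) : powHalf (n + 1) ≤ powHalf n := by
  induction n with
  | zero =>
    refine le_of_forall_lf (fun i => ?_) (fun j => isEmptyElim j)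
    exact lf_of_le_moveLeft (i := default) (by rw [powHalf_moveLeft, powHalf_moveLeft])
  | succ m ih =>
    refine le_of_forall_lf (fun i => ?_) (fun j => ?_)
    · exact lf_of_le_moveLeft (i := default) (by rw [powHalf_moveLeft, powHalf_moveLeft])
    · exact lf_of_moveRight_le (j := PUnit.unit) ih

theorem add_powHalf_aux (n : ℕ)
    (h : ∀ j, powHalf.{u} (n + 1) + powHalf (n + 1) ⧏ (powHalf n).moveRight j) :
    powHalf.{u} (n + 1) + powHalf (n + 1) ≈ powHalf n := by
  constructor
  · refine le_of_forall_lf ?_ h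
    rintro (i | i)
    · exact lf_of_le_of_lf (zero_add_equiv (powHalf (n + 1))).1 (powHalf_succ_lf n)
    · exact lf_of_le_of_lf (add_zero_equiv (powHalf (n + 1))).1 (powHalf_succ_lf n)
  · refine le_of_forall_lf (fun i => ?_) ?_
    · rw [powHalf_moveLeft]
      exact lf_of_le_moveLeft (i := Sum.inl PUnit.unit)
        (le_trans (zero_le_powHalf (n + 1)) (zero_add_equiv _).2)
    · rintro (j | j)
      · exact lf_of_le_moveLeft (y := powHalf n + powHalf (n + 1)) (i := toLeftMovesAdd (Sum.inr default))
          (by rw [add_moveLeft_inr, powHalf_moveLeft]; exact (add_zero_equiv _).2)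
      · exact lf_of_le_moveLeft (y := powHalf (n + 1) + powHalf n) (i := toLeftMovesAdd (Sum.inl default))
          (by rw [add_moveLeft_inl, powHalf_moveLeft]; exact (zero_add_equiv _).2)

theorem add_powHalf_succ_self_eq_powHalf (n : ℕ) :
    powHalf (n + 1) + powHalf (n + 1) ≈ powHalf n := by
  induction n with
  | zero => exact add_powHalf_aux 0 (fun j => isEmptyElim j)
  | succ m ih =>
    exact add_powHalf_aux (m + 1) (fun j => lf_of_moveRight_le (j := Sum.inl PUnit.unit)
      (le_trans (add_le_add_left' (powHalf_succ_le_powHalf (m + 1)) _) ih.1))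

end PGame

/-- The type of games: pregames up to equivalence. -/
abbrev Game := Quotient PGame.setoid

namespace Game

instance : Zero Game := ⟨⟦0⟧⟩

instance : Add Game :=
  ⟨Quotient.map₂ (· + ·) fun _ _ hx _ _ hy => PGame.add_congr hx hy⟩

instance : Neg Game :=
  ⟨Quotient.map Neg.neg fun _ _ h => PGame.neg_congr h⟩

theorem le_of_quot_le {x y : PGame} (h : (⟦x⟧ : Game) ≤ ⟦y⟧) : x ≤ y := by
  induction h with
  | single h => exact h.elim id (·.1)
  | tail _ h ih => exact le_trans ih (h.elim id (·.1))

instance : PartialOrder Game :=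
  { Quotient.instPreorder with
    le_antisymm := by
      rintro ⟨x⟩ ⟨y⟩ h1 h2; exact Quot.sound ⟨le_of_quot_le h1, le_of_quot_le h2⟩ }

instance : AddCommGroup Game where
  add_assoc := by rintro ⟨x⟩ ⟨y⟩ ⟨z⟩; exact Quot.sound (PGame.add_assoc_aux x y z)
  zero_add := by rintro ⟨x⟩; exact Quot.sound (PGame.zero_add_equiv x)
  add_zero := by rintro ⟨x⟩; exact Quot.sound (PGame.add_zero_equiv x)
  nsmul := nsmulRec
  zsmul := zsmulRec
  neg_add_cancel := by rintro ⟨x⟩; exact Quot.sound (PGame.neg_add_cancel_equiv x)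
  add_comm := by rintro ⟨x⟩ ⟨y⟩; exact Quot.sound (PGame.add_comm_equiv x y)

instance : IsOrderedAddMonoid Game where
  add_le_add_left := by rintro ⟨a⟩ ⟨b⟩ h ⟨c⟩; exact Relation.TransGen.single (Or.inl (PGame.add_le_add_right' (le_of_quot_le h) c))

end Game

namespace PGame

@[simp]
theorem quot_add (x y : PGame) : (⟦x + y⟧ : Game) = ⟦x⟧ + ⟦y⟧ := rfl

@[simp]
theorem quot_neg (x : PGame) : (⟦-x⟧ : Game) = -⟦x⟧ := rfl

@[simp]
theorem quot_zero : (⟦0⟧ : Game) = 0 := rfl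

theorem le_iff_game_le {x y : PGame} : x ≤ y ↔ (⟦x⟧ : Game) ≤ ⟦y⟧ :=
  ⟨fun h => Relation.TransGen.single (Or.inl h), Game.le_of_quot_le⟩

theorem equiv_iff_game_eq {x y : PGame} : x ≈ y ↔ (⟦x⟧ : Game) = ⟦y⟧ :=
  ⟨fun h => Quot.sound h, fun h => Quotient.exact h⟩

theorem quot_nsmulPG (n : ℕ) (x : PGame) : (⟦nsmulPG n x⟧ : Game) = n • (⟦x⟧ : Game) := by
  induction n with
  | zero => simp [nsmulPG]
  | succ n ih => simp [nsmulPG, succ_nsmul, ih]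

theorem quot_zsmulPG (m : ℤ) (x : PGame) : (⟦zsmulPG m x⟧ : Game) = m • (⟦x⟧ : Game) := by
  cases m with
  | ofNat n => simp [zsmulPG, quot_nsmulPG]
  | negSucc n => rw [negSucc_zsmul, ← quot_nsmulPG]; rfl

end PGame

end SetTheory

open SetTheory

open scoped PGame

namespace SeqCompound

theorem Dicotic.iff {G : PGame} (h : Dicotic G) : Nonempty G.LeftMoves ↔ Nonempty G.RightMoves := by
  cases G; exact h.1
theorem Dicotic.moveLeft {G : PGame} (h : Dicotic G) (i) : Dicotic (G.moveLeft i) := by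
  cases G; exact h.2.1 i
theorem Dicotic.moveRight {G : PGame} (h : Dicotic G) (j) : Dicotic (G.moveRight j) := by
  cases G; exact h.2.2 j

theorem Dicotic.neg : ∀ {G : PGame}, Dicotic G → Dicotic (-G)
  | PGame.mk α β L R, h => by
    rw [PGame.neg_def]
    exact ⟨h.1.symm, fun b => (h.2.2 b).neg, fun a => (h.2.1 a).neg⟩

theorem dicotic_le_powHalf (d : PGame) :
    Dicotic d → ∀ k : ℕ, d ≤ PGame.powHalf k ∧ d ⧏ PGame.powHalf k := by
  induction d using PGame.moveRecOn with
  | _ d ihL ihR =>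
    intro hd
    have hlf : ∀ k, d ⧏ PGame.powHalf k := by
      intro k
      rcases isEmpty_or_nonempty d.RightMoves with he | hne
      · have hL : IsEmpty d.LeftMoves := by
          rw [← not_nonempty_iff] at he ⊢
          exact fun h => he (hd.iff.1 h)
        have hd0 : d ≤ 0 := PGame.le_of_forall_lf (fun i => hL.elim i) (fun j => isEmptyElim j)
        exact PGame.lf_of_le_moveLeft (i := default)
          (by rw [PGame.powHalf_moveLeft]; exact hd0)
      · obtain ⟨j⟩ := hne
        exact PGame.lf_of_moveRight_le ((ihR j (hd.moveRight j) k).1)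
    intro k
    refine ⟨PGame.le_of_forall_lf (fun i => (ihL i (hd.moveLeft i) k).2) (fun j => ?_), hlf k⟩
    cases k with
    | zero => exact isEmptyElim j
    | succ k => rw [PGame.powHalf_succ_moveRight]; exact hlf k

theorem mk_equiv_mk {α β : Type u} {L1 L2 : α → PGame} {R1 R2 : β → PGame}
    (hL : ∀ a, L1 a ≈ L2 a) (hR : ∀ b, R1 b ≈ R2 b) :
    PGame.mk α β L1 R1 ≈ PGame.mk α β L2 R2 := by
  constructor
  · exact PGame.le_of_forall_lf
      (fun i => PGame.lf_of_le_of_lf (hL i).1 (PGame.moveLeft_lf (x := PGame.mk α β L2 R2) i))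
      (fun j => PGame.lf_of_moveRight_le (x := PGame.mk α β L1 R1) (j := j) (hR j).1)
  · exact PGame.le_of_forall_lf
      (fun i => PGame.lf_of_le_of_lf (hL i).2 (PGame.moveLeft_lf (x := PGame.mk α β L1 R1) i))
      (fun j => PGame.lf_of_moveRight_le (x := PGame.mk α β L2 R2) (j := j) (hR j).2)

theorem tr_le {α β : Type u} [Nonempty α] [Nonempty β] (L : α → PGame) (R : β → PGame)
    (hdic : Dicotic (PGame.mk α β L R)) (x : PGame) (k : ℕ)
    (hx : ∀ j, (⟦x⟧ : Game) + ⟦PGame.powHalf k⟧ ≤ ⟦x.moveRight j⟧) :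
    PGame.mk α β (fun a => x + L a) (fun b => x + R b) ≤ x + PGame.mk α β L R := by
  have h3 : (⟦PGame.powHalf (k+1)⟧ : Game) + ⟦PGame.powHalf (k+1)⟧ = ⟦PGame.powHalf k⟧ :=
    Quotient.sound (PGame.add_powHalf_succ_self_eq_powHalf k)
  refine PGame.le_of_forall_lf
    (fun a => PGame.add_lf_add_left (PGame.moveLeft_lf (x := PGame.mk α β L R) a) x)
    (fun j => ?_)
  refine PGame.rightMoves_add_cases (P := fun j => (PGame.mk α β (fun a => x + L a) fun b => x + R b) ⧏ (x + PGame.mk α β L R).moveRight j) j (fun jx => ?_) (fun b => ?_)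
  · show (PGame.mk α β (fun a => x + L a) fun b => x + R b) ⧏
        (x + PGame.mk α β L R).moveRight (PGame.toRightMovesAdd (Sum.inl jx))
    rw [PGame.add_moveRight_inl]
    obtain ⟨b₀⟩ := ‹Nonempty β›
    refine PGame.lf_of_moveRight_le (j := b₀) ?_
    show x + R b₀ ≤ x.moveRight jx + PGame.mk α β L R
    rw [PGame.le_iff_game_le]
    simp only [PGame.quot_add]
    have h1 : (⟦R b₀⟧ : Game) ≤ ⟦PGame.powHalf (k+1)⟧ :=
      PGame.le_iff_game_le.1 ((dicotic_le_powHalf _ (hdic.moveRight b₀) (k+1)).1)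
    have h2 : -(⟦PGame.mk α β L R⟧ : Game) ≤ ⟦PGame.powHalf (k+1)⟧ := by
      have := PGame.le_iff_game_le.1 ((dicotic_le_powHalf _ (Dicotic.neg hdic) (k+1)).1)
      rwa [PGame.quot_neg] at this
    have h4 := hx jx
    have : (⟦R b₀⟧ : Game) - ⟦PGame.mk α β L R⟧ ≤ ⟦PGame.powHalf k⟧ := by
      rw [← h3]; exact add_le_add h1 h2
    calc (⟦x⟧ : Game) + ⟦R b₀⟧
        = ⟦x⟧ + (⟦R b₀⟧ - ⟦PGame.mk α β L R⟧) + ⟦PGame.mk α β L R⟧ := by abel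
      _ ≤ ⟦x⟧ + ⟦PGame.powHalf k⟧ + ⟦PGame.mk α β L R⟧ := by
          exact add_le_add_left (add_le_add_right this _) _
      _ ≤ ⟦x.moveRight jx⟧ + ⟦PGame.mk α β L R⟧ := add_le_add_left h4 _
  · show (PGame.mk α β (fun a => x + L a) fun b => x + R b) ⧏
        (x + PGame.mk α β L R).moveRight (PGame.toRightMovesAdd (Sum.inr b))
    rw [PGame.add_moveRight_inr]
    exact PGame.lf_of_moveRight_le (j := b) le_rfl

theorem neg_add_equiv (x y : PGame) : -(x + y) ≈ -x + -y :=
  PGame.equiv_iff_game_eq.2 (by simp only [PGame.quot_neg, PGame.quot_add]; abel)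

theorem tr_equiv {α β : Type u} [Nonempty α] [Nonempty β] (L : α → PGame) (R : β → PGame)
    (hdic : Dicotic (PGame.mk α β L R)) (x : PGame) (k : ℕ)
    (hxR : ∀ j, (⟦x⟧ : Game) + ⟦PGame.powHalf k⟧ ≤ ⟦x.moveRight j⟧)
    (hxL : ∀ i, (⟦x.moveLeft i⟧ : Game) + ⟦PGame.powHalf k⟧ ≤ ⟦x⟧) :
    PGame.mk α β (fun a => x + L a) (fun b => x + R b) ≈ x + PGame.mk α β L R := by
  constructor
  · exact tr_le L R hdic x k hxR
  · -- use negation symmetry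
    have hdneg : Dicotic (PGame.mk β α (fun b => -R b) (fun a => -L a)) := by
      rw [← PGame.neg_def]; exact hdic.neg
    have key := tr_le (α := β) (β := α) (fun b => -R b) (fun a => -L a) hdneg (-x) k ?_
    · -- key : mk β α (fun b => -x + -R b) (fun a => -x + -L a) ≤ -x + mk β α (-R) (-L)
      refine PGame.neg_le_neg_iff.1 ?_
      calc -(PGame.mk α β (fun a => x + L a) fun b => x + R b)
          = PGame.mk β α (fun b => -(x + R b)) (fun a => -(x + L a)) := PGame.neg_def
        _ ≤ PGame.mk β α (fun b => -x + -R b) (fun a => -x + -L a) :=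
            (mk_equiv_mk (fun b => neg_add_equiv x (R b)) (fun a => neg_add_equiv x (L a))).1
        _ ≤ -x + PGame.mk β α (fun b => -R b) (fun a => -L a) := key
        _ = -x + -(PGame.mk α β L R) := by rw [PGame.neg_def]
        _ ≤ -(x + PGame.mk α β L R) := (neg_add_equiv _ _).2
    · intro j
      have : ((-x).moveRight j) = -(x.moveLeft (PGame.toRightMovesNeg.symm j)) :=
        PGame.moveRight_neg' j
      rw [this, PGame.quot_neg, PGame.quot_neg]
      have := hxL (PGame.toRightMovesNeg.symm j)
      -- ⟦x.moveLeft i⟧ + h ≤ ⟦x⟧  ⟹  -⟦x⟧ + h ≤ -⟦x.moveLeft i⟧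
      have h2 := hxL (PGame.toRightMovesNeg.symm j)
      have := add_le_add_left h2 (-(⟦x⟧:Game) - ⟦x.moveLeft (PGame.toRightMovesNeg.symm j)⟧)
      calc -(⟦x⟧:Game) + ⟦PGame.powHalf k⟧
          = ⟦x.moveLeft (PGame.toRightMovesNeg.symm j)⟧ + ⟦PGame.powHalf k⟧ +
            (-(⟦x⟧:Game) - ⟦x.moveLeft (PGame.toRightMovesNeg.symm j)⟧) := by abel
        _ ≤ ⟦x⟧ + (-(⟦x⟧:Game) - ⟦x.moveLeft (PGame.toRightMovesNeg.symm j)⟧) := this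
        _ = -⟦x.moveLeft (PGame.toRightMovesNeg.symm j)⟧ := by abel

/-- `k`-fold sum of copies of `p`. -/
def rep : ℕ → PGame → PGame
  | 0, _ => 0
  | k + 1, p => rep k p + p

theorem rep_val (k : ℕ) (p : PGame) : (⟦rep k p⟧ : Game) = k • (⟦p⟧ : Game) := by
  induction k with
  | zero => simp [rep]
  | succ k ih => simp [rep, succ_nsmul, ih]

theorem rep_right (k : ℕ) (p : PGame) (n : ℕ)
    (hp : ∀ j, (⟦p⟧ : Game) + ⟦PGame.powHalf n⟧ ≤ ⟦p.moveRight j⟧) :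
    ∀ j, (⟦rep k p⟧ : Game) + ⟦PGame.powHalf n⟧ ≤ ⟦(rep k p).moveRight j⟧ := by
  induction k with
  | zero => exact fun j => isEmptyElim (α := (0 : PGame).RightMoves) j
  | succ k ih =>
    intro j
    refine PGame.rightMoves_add_cases (x := rep k p) (y := p)
      (P := fun j => (⟦rep (k+1) p⟧ : Game) + ⟦PGame.powHalf n⟧ ≤ ⟦(rep k p + p).moveRight j⟧)
      j (fun jx => ?_) (fun jp => ?_)
    · beta_reduce
      rw [PGame.add_moveRight_inl]
      show (⟦rep k p + p⟧ : Game) + _ ≤ _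
      simp only [PGame.quot_add]
      have := add_le_add_left (ih jx) (⟦p⟧ : Game)
      calc (⟦rep k p⟧ : Game) + ⟦p⟧ + ⟦PGame.powHalf n⟧
          = ⟦rep k p⟧ + ⟦PGame.powHalf n⟧ + ⟦p⟧ := by abel
        _ ≤ ⟦(rep k p).moveRight jx⟧ + ⟦p⟧ := this
    · beta_reduce
      rw [PGame.add_moveRight_inr]
      show (⟦rep k p + p⟧ : Game) + _ ≤ _
      simp only [PGame.quot_add]
      have := add_le_add_right (hp jp) (⟦rep k p⟧ : Game)
      calc (⟦rep k p⟧ : Game) + ⟦p⟧ + ⟦PGame.powHalf n⟧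
          = ⟦rep k p⟧ + (⟦p⟧ + ⟦PGame.powHalf n⟧) := by abel
        _ ≤ ⟦rep k p⟧ + ⟦p.moveRight jp⟧ := this

theorem rep_left (k : ℕ) (p : PGame) (n : ℕ)
    (hp : ∀ i, (⟦p.moveLeft i⟧ : Game) + ⟦PGame.powHalf n⟧ ≤ ⟦p⟧) :
    ∀ i, (⟦(rep k p).moveLeft i⟧ : Game) + ⟦PGame.powHalf n⟧ ≤ ⟦rep k p⟧ := by
  induction k with
  | zero => exact fun i => isEmptyElim (α := (0 : PGame).LeftMoves) i
  | succ k ih =>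
    intro i
    refine PGame.leftMoves_add_cases (x := rep k p) (y := p)
      (P := fun i => (⟦(rep k p + p).moveLeft i⟧ : Game) + ⟦PGame.powHalf n⟧ ≤ ⟦rep (k+1) p⟧)
      i (fun ix => ?_) (fun ip => ?_)
    · beta_reduce
      rw [PGame.add_moveLeft_inl]
      show _ ≤ (⟦rep k p + p⟧ : Game)
      simp only [PGame.quot_add]
      have := add_le_add_left (ih ix) (⟦p⟧ : Game)
      calc (⟦(rep k p).moveLeft ix⟧ : Game) + ⟦p⟧ + ⟦PGame.powHalf n⟧
          = ⟦(rep k p).moveLeft ix⟧ + ⟦PGame.powHalf n⟧ + ⟦p⟧ := by abel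
        _ ≤ ⟦rep k p⟧ + ⟦p⟧ := this
    · beta_reduce
      rw [PGame.add_moveLeft_inr]
      show _ ≤ (⟦rep k p + p⟧ : Game)
      simp only [PGame.quot_add]
      have := add_le_add_right (hp ip) (⟦rep k p⟧ : Game)
      calc (⟦rep k p⟧ : Game) + ⟦p.moveLeft ip⟧ + ⟦PGame.powHalf n⟧
          = ⟦rep k p⟧ + (⟦p.moveLeft ip⟧ + ⟦PGame.powHalf n⟧) := by abel
        _ ≤ ⟦rep k p⟧ + ⟦p⟧ := this

theorem powHalf_right (n : ℕ) :
    ∀ j, (⟦PGame.powHalf n⟧ : Game) + ⟦PGame.powHalf n⟧ ≤ ⟦(PGame.powHalf n).moveRight j⟧ := by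
  cases n with
  | zero => exact fun j => isEmptyElim j
  | succ n =>
    intro j
    rw [PGame.powHalf_succ_moveRight]
    exact (Quotient.sound (PGame.add_powHalf_succ_self_eq_powHalf n)).le

theorem powHalf_left (n : ℕ) :
    ∀ i, (⟦(PGame.powHalf n).moveLeft i⟧ : Game) + ⟦PGame.powHalf n⟧ ≤ ⟦PGame.powHalf n⟧ := by
  intro i
  rw [PGame.powHalf_moveLeft]
  simp

theorem negPowHalf_right (n : ℕ) :
    ∀ j, (⟦-PGame.powHalf n⟧ : Game) + ⟦PGame.powHalf n⟧ ≤ ⟦(-PGame.powHalf n).moveRight j⟧ := by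
  intro j
  rw [PGame.moveRight_neg', PGame.powHalf_moveLeft]
  simp

theorem negPowHalf_left (n : ℕ) :
    ∀ i, (⟦(-PGame.powHalf n).moveLeft i⟧ : Game) + ⟦PGame.powHalf n⟧ ≤ ⟦-PGame.powHalf n⟧ := by
  intro i
  rw [PGame.moveLeft_neg']
  have := powHalf_right n (PGame.toLeftMovesNeg.symm i)
  rw [PGame.quot_neg, PGame.quot_neg]
  calc -(⟦(PGame.powHalf n).moveRight (PGame.toLeftMovesNeg.symm i)⟧ : Game) + ⟦PGame.powHalf n⟧
      ≤ -(⟦PGame.powHalf n⟧ + ⟦PGame.powHalf n⟧) + ⟦PGame.powHalf n⟧ := by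
        have := neg_le_neg this
        exact add_le_add_left this _
    _ = -⟦PGame.powHalf n⟧ := by abel

open Classical in
theorem seqc_mk (α β : Type u) (L R) (K : PGame) : seqc (PGame.mk α β L R) K =
    if Nonempty α then
      if Nonempty β then
        PGame.mk α β (fun a => seqc (L a) K) (fun b => seqc (R b) K)
      else
        PGame.mk α K.RightMoves (fun a => seqc (L a) K) K.moveRight
    else
      if Nonempty β then
        PGame.mk K.LeftMoves β K.moveLeft (fun b => seqc (R b) K)
      else K := by
  rw [seqc]

theorem seqc_aux : ∀ (G X H : PGame), Dicotic G → Dicotic (seqc G H) →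
    (∃ (m : ℤ) (n : ℕ), (⟦X⟧ : Game) = m • (⟦PGame.powHalf n⟧ : Game)) →
    seqc G (X + H) ≈ X + seqc G H := by
  intro G
  induction G using PGame.moveRecOn with
  | _ G ihL ihR =>
  intro X H hG hGH hX
  obtain ⟨α, β, L, R⟩ := G
  rcases isEmpty_or_nonempty α with hα | hα <;> rcases isEmpty_or_nonempty β with hβ | hβ
  · rw [seqc_mk α β L R (X + H), if_neg (not_nonempty_iff.2 hα), if_neg (not_nonempty_iff.2 hβ),
      seqc_mk α β L R H, if_neg (not_nonempty_iff.2 hα), if_neg (not_nonempty_iff.2 hβ)]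
  · exact absurd (hG.1.2 hβ) (not_nonempty_iff.2 hα)
  · exact absurd (hG.1.1 hα) (not_nonempty_iff.2 hβ)
  · obtain ⟨m, n, hm⟩ := hX
    rw [seqc_mk α β L R (X + H), if_pos hα, if_pos hβ,
      seqc_mk α β L R H, if_pos hα, if_pos hβ]
    rw [seqc_mk α β L R H, if_pos hα, if_pos hβ] at hGH
    have main : ∀ x : PGame, X ≈ x →
        (∀ j, (⟦x⟧ : Game) + ⟦PGame.powHalf n⟧ ≤ ⟦x.moveRight j⟧) →
        (∀ i, (⟦x.moveLeft i⟧ : Game) + ⟦PGame.powHalf n⟧ ≤ ⟦x⟧) →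
        PGame.mk α β (fun a => seqc (L a) (X + H)) (fun b => seqc (R b) (X + H)) ≈
          X + PGame.mk α β (fun a => seqc (L a) H) (fun b => seqc (R b) H) := by
      intro x hXx hxR hxL
      calc PGame.mk α β (fun a => seqc (L a) (X + H)) (fun b => seqc (R b) (X + H))
          ≈ PGame.mk α β (fun a => x + seqc (L a) H) (fun b => x + seqc (R b) H) :=
            mk_equiv_mk
              (fun a => Setoid.trans (ihL a X H (hG.2.1 a) (hGH.2.1 a) ⟨m, n, hm⟩)
                (PGame.add_congr hXx (PGame.equiv_rfl)))
              (fun b => Setoid.trans (ihR b X H (hG.2.2 b) (hGH.2.2 b) ⟨m, n, hm⟩)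
                (PGame.add_congr hXx (PGame.equiv_rfl)))
        _ ≈ x + PGame.mk α β (fun a => seqc (L a) H) (fun b => seqc (R b) H) :=
            tr_equiv _ _ hGH x n hxR hxL
        _ ≈ X + PGame.mk α β (fun a => seqc (L a) H) (fun b => seqc (R b) H) :=
            PGame.add_congr (Setoid.symm hXx) PGame.equiv_rfl
    rcases le_or_gt 0 m with hm0 | hm0
    · refine main (rep m.toNat (PGame.powHalf n)) ?_
        (rep_right _ _ n (powHalf_right n)) (rep_left _ _ n (powHalf_left n))
      refine PGame.equiv_iff_game_eq.2 (hm.trans ?_)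
      rw [rep_val, ← natCast_zsmul, Int.toNat_of_nonneg hm0]
    · refine main (rep (-m).toNat (-PGame.powHalf n)) ?_
        (rep_right _ _ n (negPowHalf_right n)) (rep_left _ _ n (negPowHalf_left n))
      refine PGame.equiv_iff_game_eq.2 (hm.trans ?_)
      rw [rep_val, ← natCast_zsmul, Int.toNat_of_nonneg (by omega : (0:ℤ) ≤ -m),
        PGame.quot_neg, zsmul_neg, neg_zsmul, neg_neg]

end SeqCompound

open SeqCompound in
/-- number translation for sequential compounds:
if `G` and `G → H` are dicotic and `X` is equal in value to a dyadic rational,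
then `G → (X + H) = X + (G → H)`. -/
theorem seqc_number_translation (G H X : PGame)
    [PGame.Short G] [PGame.Short H] [PGame.Short X]
    (hG : Dicotic G) (hGH : Dicotic (seqc G H))
    (hX : ∃ (m : ℤ) (n : ℕ), X ≈ PGame.zsmulPG m (PGame.powHalf n)) :
    seqc G (X + H) ≈ X + seqc G H := by
  obtain ⟨m, n, h⟩ := hX
  exact seqc_aux G X H hG hGH ⟨m, n, (PGame.equiv_iff_game_eq.1 h).trans (PGame.quot_zsmulPG m _)⟩
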